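/- Let ψ : ℝ₊ → ℝ₊ be monotonic (non-increasing) with ∑_{h=1}^∞ (log h)^{n-1} ψ(h) < ∞. Then ∑_{q∈ℤⁿ, q≠0} ψ(Π₊(q)) < ∞, where Π₊(q) = ∏_{i: qᵢ≠0} |qᵢ|. -/

import Mathlib

open scoped BigOperators
open ENNReal

/-- `Π₊(q)`: product of `|qᵢ|` over the nonzero coordinates (empty product = 1). -/
noncomputable def PiPlus {n : ℕ} (q : Fin n → ℤ) : ℝ :=
  ∏ i, if q i = 0 then (1 : ℝ) else |(q i : ℝ)|

/-- natural-number version of `PiPlus`. -/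
def Mnat {k : ℕ} (q : Fin k → ℤ) : ℕ := ∏ i, max (q i).natAbs 1

lemma Mnat_pos {k : ℕ} (q : Fin k → ℤ) : 0 < Mnat q :=
  Finset.prod_pos fun i _ => lt_of_lt_of_le one_pos (le_max_right _ _)

lemma PiPlus_eq {k : ℕ} (q : Fin k → ℤ) : PiPlus q = (Mnat q : ℝ) := by
  unfold PiPlus Mnat
  push_cast
  refine Finset.prod_congr rfl fun i _ => ?_
  rcases eq_or_ne (q i) 0 with h | h
  · simp [h]
  · have h1 : 1 ≤ (q i).natAbs := Int.natAbs_pos.mpr h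
    rw [if_neg h, max_eq_left (by exact_mod_cast h1), Nat.cast_natAbs, Int.cast_abs]

lemma Mnat_cons {k : ℕ} (t : ℤ) (q : Fin k → ℤ) :
    Mnat (Fin.cons t q) = max t.natAbs 1 * Mnat q := by
  unfold Mnat
  rw [Fin.prod_univ_succ]
  simp


/-- Summing any `G ∘ (t ↦ max |t| 1)` over `ℤ` is at most `3` times the sum over positive values. -/
lemma sumZ (G : ℕ → ℝ≥0∞) : ∑' t : ℤ, G (max t.natAbs 1) ≤ 3 * ∑' a : ℕ, G (a + 1) := by
  set j : ℤ → ℕ × Fin 3 := fun t =>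
    (max t.natAbs 1 - 1, if t < 0 then 0 else if t = 0 then 1 else 2) with hj
  have hinj : Function.Injective j := by
    intro s t h
    simp only [hj, Prod.mk.injEq] at h
    obtain ⟨h1, h2⟩ := h
    by_cases hs : s < 0 <;> by_cases ht : t < 0 <;>
      by_cases hs0 : s = 0 <;> by_cases ht0 : t = 0 <;>
      simp [hs, ht, hs0, ht0] at h2 ⊢ <;> omega
  calc ∑' t : ℤ, G (max t.natAbs 1)
      = ∑' t : ℤ, (fun p : ℕ × Fin 3 => G (p.1 + 1)) (j t) := by
        refine tsum_congr fun t => ?_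
        simp only [hj]
        congr 1
        omega
    _ ≤ ∑' p : ℕ × Fin 3, G (p.1 + 1) := ENNReal.tsum_comp_le_tsum_of_injective hinj _
    _ = ∑' a : ℕ, ∑' _ : Fin 3, G (a + 1) :=
        ENNReal.tsum_prod (f := fun a (_ : Fin 3) => G (a + 1))
    _ = 3 * ∑' a : ℕ, G (a + 1) := by
        simp only [tsum_fintype, Finset.sum_const, Finset.card_univ, Fintype.card_fin,
          nsmul_eq_mul, Nat.cast_ofNat]
        rw [ENNReal.tsum_mul_left]


variable {ψ : ℝ → ℝ}

lemma ofReal_psi_le (hmono : AntitoneOn ψ (Set.Ioi 0)) {a b : ℕ} (ha : 0 < a) (hab : a ≤ b) :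
    ENNReal.ofReal (ψ b) ≤ ENNReal.ofReal (ψ a) := by
  refine ENNReal.ofReal_le_ofReal (hmono ?_ ?_ ?_)
  · exact Set.mem_Ioi.mpr (by exact_mod_cast ha)
  · exact Set.mem_Ioi.mpr (by exact_mod_cast lt_of_lt_of_le ha hab)
  · exact_mod_cast hab

/-- block decomposition bound -/
lemma sumBlocks (hmono : AntitoneOn ψ (Set.Ioi 0)) (h : ℕ) :
    ∑' a : ℕ, ENNReal.ofReal (ψ (((a + 1) * (h + 1) : ℕ))) ≤
      ENNReal.ofReal (ψ ((h + 1 : ℕ))) +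
        (((h : ℝ≥0∞) + 1))⁻¹ *
          ∑' m : ℕ, (if h + 1 ≤ m then ENNReal.ofReal (ψ ((m + 1 : ℕ))) else 0) := by
  set D : ℕ → ℝ≥0∞ := fun m => if h + 1 ≤ m then ENNReal.ofReal (ψ ((m + 1 : ℕ))) else 0 with hD
  rw [tsum_eq_zero_add' ENNReal.summable]
  refine add_le_add (le_of_eq (by norm_num)) ?_
  -- tail: ∑' a, ofReal (ψ ((a+2)*(h+1))) ≤ (h+1)⁻¹ * ∑' m, D m
  rw [← ENNReal.div_eq_inv_mul]
  rw [ENNReal.le_div_iff_mul_le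
    (Or.inl (by simp)) (Or.inl (by simp [ENNReal.natCast_ne_top]))]
  have step1 : (∑' a : ℕ, ENNReal.ofReal (ψ (((a + 1 + 1) * (h + 1) : ℕ)))) * ((h : ℝ≥0∞) + 1)
      = ∑' p : ℕ × Fin (h + 1), ENNReal.ofReal (ψ (((p.1 + 2) * (h + 1) : ℕ))) := by
    rw [ENNReal.tsum_prod
        (f := fun a (_ : Fin (h + 1)) => ENNReal.ofReal (ψ (((a + 2) * (h + 1) : ℕ)))),
      ← ENNReal.tsum_mul_right]
    refine tsum_congr fun a => ?_
    simp only [tsum_fintype, Finset.sum_const, Finset.card_univ, Fintype.card_fin,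
      nsmul_eq_mul]
    push_cast
    rw [mul_comm]
    ring_nf
  rw [step1]
  have key : ∀ p : ℕ × Fin (h + 1),
      ENNReal.ofReal (ψ (((p.1 + 2) * (h + 1) : ℕ))) ≤ D ((p.1 + 1) * (h + 1) + (p.2 : ℕ)) := by
    rintro ⟨a, r⟩
    have hr : (r : ℕ) < h + 1 := r.isLt
    have h1 : h + 1 ≤ (a + 1) * (h + 1) + (r : ℕ) := by nlinarith
    rw [hD]
    simp only [if_pos h1]
    refine ofReal_psi_le hmono (by positivity) ?_
    nlinarith
  calc ∑' p : ℕ × Fin (h + 1), ENNReal.ofReal (ψ (((p.1 + 2) * (h + 1) : ℕ)))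
      ≤ ∑' p : ℕ × Fin (h + 1), D ((p.1 + 1) * (h + 1) + (p.2 : ℕ)) :=
        ENNReal.tsum_le_tsum key
    _ ≤ ∑' m : ℕ, D m := by
        refine ENNReal.tsum_comp_le_tsum_of_injective ?_ D
        rintro ⟨a, r⟩ ⟨a', r'⟩ hh
        simp only at hh
        have hr : (r : ℕ) < h + 1 := r.isLt
        have hr' : (r' : ℕ) < h + 1 := r'.isLt
        have h4 : ((a + 1) * (h + 1) + (r : ℕ)) % (h + 1) = (r : ℕ) := by
          simp [Nat.add_mod, Nat.mul_mod_left, Nat.mod_eq_of_lt hr]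
        have h5 : ((a' + 1) * (h + 1) + (r' : ℕ)) % (h + 1) = (r' : ℕ) := by
          simp [Nat.add_mod, Nat.mul_mod_left, Nat.mod_eq_of_lt hr']
        have h2 : (r : ℕ) = (r' : ℕ) := by rw [← h4, ← h5, hh]
        have h3 : a = a' := by
          rw [h2] at hh
          have h6 := Nat.add_right_cancel hh
          have := Nat.eq_of_mul_eq_mul_right (show 0 < h + 1 by omega) h6
          omega
        simp [h3, Fin.ext_iff, h2]


lemma harmonic_le (m : ℕ) :
    ∑ h ∈ Finset.range m, (1 : ℝ) / (h + 1) ≤ 1 + Real.log (m + 1) := by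
  have main : ∀ m : ℕ, ∑ h ∈ Finset.range m, (1 : ℝ) / (h + 1) ≤ 1 + Real.log m := by
    intro m
    induction m with
    | zero => simp
    | succ m ih =>
      rcases Nat.eq_zero_or_pos m with hm | hm
      · subst hm; simp
      · rw [Finset.sum_range_succ]
        have hm' : (0 : ℝ) < m := by exact_mod_cast hm
        have key : (1 : ℝ) / (m + 1) ≤ Real.log (m + 1) - Real.log m := by
          have h1 : Real.log ((m : ℝ) / (m + 1)) ≤ (m : ℝ) / (m + 1) - 1 :=
            Real.log_le_sub_one_of_pos (by positivity)
          rw [Real.log_div (by positivity) (by positivity)] at h1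
          have h2 : (m : ℝ) / (m + 1) - 1 = -(1 / (m + 1)) := by field_simp; ring
          rw [h2] at h1
          linarith
        push_cast
        linarith
  have := main m
  have h3 : Real.log m ≤ Real.log (m + 1) := by
    rcases Nat.eq_zero_or_pos m with hm | hm
    · subst hm; simp
    · exact Real.log_le_log (by exact_mod_cast hm) (by linarith [Nat.cast_nonneg (α := ℝ) m])
  linarith

noncomputable def LL (h : ℕ) : ℝ≥0∞ := ENNReal.ofReal (1 + Real.log (h + 1))

lemma LL_mono {h m : ℕ} (hhm : h ≤ m) : LL h ≤ LL m := by
  refine ENNReal.ofReal_le_ofReal (add_le_add_right ?_ 1)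
  exact Real.log_le_log (by positivity) (by exact_mod_cast add_le_add_left (Nat.cast_le.mpr hhm) 1)

lemma one_le_LL (h : ℕ) : 1 ≤ LL h := by
  rw [LL, ← ENNReal.ofReal_one]
  exact ENNReal.ofReal_le_ofReal (by
    have : (0:ℝ) ≤ Real.log (h+1) := Real.log_nonneg (by push_cast; linarith [Nat.cast_nonneg (α := ℝ) h])
    linarith)

lemma inv_sum_le (m : ℕ) : ∑ h ∈ Finset.range m, ((h : ℝ≥0∞) + 1)⁻¹ ≤ LL m := by
  have e1 : ∀ h : ℕ, ((h : ℝ≥0∞) + 1)⁻¹ = ENNReal.ofReal (1 / ((h : ℝ) + 1)) := by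
    intro h
    rw [one_div, ENNReal.ofReal_inv_of_pos (by positivity)]
    congr 1
    rw [ENNReal.ofReal_add (by positivity) zero_le_one, ENNReal.ofReal_one,
      ENNReal.ofReal_natCast]
  calc ∑ h ∈ Finset.range m, ((h : ℝ≥0∞) + 1)⁻¹
      = ENNReal.ofReal (∑ h ∈ Finset.range m, 1 / ((h : ℝ) + 1)) := by
        rw [ENNReal.ofReal_sum_of_nonneg (fun i _ => by positivity)]
        exact Finset.sum_congr rfl fun h _ => e1 h
    _ ≤ LL m := ENNReal.ofReal_le_ofReal (by
        have := harmonic_le m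
        simpa using this)

lemma sumTail (ψ : ℝ → ℝ) (k : ℕ) :
    ∑' h : ℕ, (LL h) ^ k * ((h : ℝ≥0∞) + 1)⁻¹ *
        (∑' m : ℕ, (if h + 1 ≤ m then ENNReal.ofReal (ψ ((m + 1 : ℕ))) else 0)) ≤
      ∑' m : ℕ, (LL m) ^ (k + 1) * ENNReal.ofReal (ψ ((m + 1 : ℕ))) := by
  have step1 : ∀ h : ℕ, (LL h) ^ k * ((h : ℝ≥0∞) + 1)⁻¹ *
        (∑' m : ℕ, (if h + 1 ≤ m then ENNReal.ofReal (ψ ((m + 1 : ℕ))) else 0)) =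
      ∑' m : ℕ, (if h + 1 ≤ m then
        (LL h) ^ k * ((h : ℝ≥0∞) + 1)⁻¹ * ENNReal.ofReal (ψ ((m + 1 : ℕ))) else 0) := by
    intro h
    rw [← ENNReal.tsum_mul_left]
    exact tsum_congr fun m => by rw [mul_ite, mul_zero]
  calc ∑' h : ℕ, (LL h) ^ k * ((h : ℝ≥0∞) + 1)⁻¹ *
        (∑' m : ℕ, (if h + 1 ≤ m then ENNReal.ofReal (ψ ((m + 1 : ℕ))) else 0))
      = ∑' (h : ℕ) (m : ℕ), (if h + 1 ≤ m then
          (LL h) ^ k * ((h : ℝ≥0∞) + 1)⁻¹ * ENNReal.ofReal (ψ ((m + 1 : ℕ))) else 0) :=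
        tsum_congr step1
    _ = ∑' (m : ℕ) (h : ℕ), (if h + 1 ≤ m then
          (LL h) ^ k * ((h : ℝ≥0∞) + 1)⁻¹ * ENNReal.ofReal (ψ ((m + 1 : ℕ))) else 0) :=
        ENNReal.tsum_comm
    _ ≤ ∑' m : ℕ, (LL m) ^ (k + 1) * ENNReal.ofReal (ψ ((m + 1 : ℕ))) := by
        refine ENNReal.tsum_le_tsum fun m => ?_
        rw [tsum_eq_sum (s := Finset.range m)
          (fun h hh => by rw [if_neg]; simp at hh; omega)]
        calc ∑ h ∈ Finset.range m, (if h + 1 ≤ m then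
              (LL h) ^ k * ((h : ℝ≥0∞) + 1)⁻¹ * ENNReal.ofReal (ψ ((m + 1 : ℕ))) else 0)
            = ∑ h ∈ Finset.range m,
              (LL h) ^ k * ((h : ℝ≥0∞) + 1)⁻¹ * ENNReal.ofReal (ψ ((m + 1 : ℕ))) := by
              refine Finset.sum_congr rfl fun h hh => ?_
              rw [if_pos (by simp at hh; omega)]
          _ ≤ ∑ h ∈ Finset.range m,
              (LL m) ^ k * ((h : ℝ≥0∞) + 1)⁻¹ * ENNReal.ofReal (ψ ((m + 1 : ℕ))) := by
              refine Finset.sum_le_sum fun h hh => ?_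
              have : LL h ≤ LL m := LL_mono (by simp at hh; omega)
              gcongr
          _ = (LL m) ^ k * (∑ h ∈ Finset.range m, ((h : ℝ≥0∞) + 1)⁻¹) *
              ENNReal.ofReal (ψ ((m + 1 : ℕ))) := by
              rw [Finset.mul_sum, Finset.sum_mul]
          _ ≤ (LL m) ^ k * LL m * ENNReal.ofReal (ψ ((m + 1 : ℕ))) :=
              mul_le_mul' (mul_le_mul' le_rfl (inv_sum_le m)) le_rfl

          _ = (LL m) ^ (k + 1) * ENNReal.ofReal (ψ ((m + 1 : ℕ))) := by rw [pow_succ]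

lemma key : ∀ k : ℕ, ∀ ψ : ℝ → ℝ, AntitoneOn ψ (Set.Ioi 0) →
    ∑' q : Fin (k + 1) → ℤ, ENNReal.ofReal (ψ ((Mnat q : ℕ))) ≤
      9 ^ (k + 1) * ∑' h : ℕ, (LL h) ^ k * ENNReal.ofReal (ψ ((h + 1 : ℕ))) := by
  intro k
  induction k with
  | zero =>
    intro ψ hm
    have e1 : ∑' q : Fin 1 → ℤ, ENNReal.ofReal (ψ ((Mnat q : ℕ)))
        = ∑' t : ℤ, ENNReal.ofReal (ψ ((max t.natAbs 1 : ℕ))) := by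
      rw [← Equiv.tsum_eq (Equiv.funUnique (Fin 1) ℤ).symm
        (fun q => ENNReal.ofReal (ψ ((Mnat q : ℕ))))]
      refine tsum_congr fun t => ?_
      congr 2
      simp [Mnat]
    rw [e1]
    calc ∑' t : ℤ, ENNReal.ofReal (ψ ((max t.natAbs 1 : ℕ)))
        ≤ 3 * ∑' a : ℕ, ENNReal.ofReal (ψ ((a + 1 : ℕ))) :=
          sumZ (fun b => ENNReal.ofReal (ψ (b : ℕ)))
      _ ≤ 9 ^ (0 + 1) * ∑' h : ℕ, (LL h) ^ 0 * ENNReal.ofReal (ψ ((h + 1 : ℕ))) := by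
          simp only [pow_zero, one_mul, pow_one]
          exact mul_le_mul' (by norm_num) le_rfl
  | succ k ih =>
    intro ψ hm
    have e1 : ∑' q : Fin (k + 2) → ℤ, ENNReal.ofReal (ψ ((Mnat q : ℕ)))
        = ∑' (t : ℤ) (q : Fin (k + 1) → ℤ),
            ENNReal.ofReal (ψ ((max t.natAbs 1 * Mnat q : ℕ))) := by
      rw [← Equiv.tsum_eq (Fin.consEquiv (fun _ : Fin (k + 2) => ℤ))
        (fun q => ENNReal.ofReal (ψ ((Mnat q : ℕ))))]
      rw [ENNReal.tsum_prod']
      refine tsum_congr fun t => tsum_congr fun q => ?_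
      congr 2
      rw [show (Fin.consEquiv (fun _ : Fin (k + 2) => ℤ)) (t, q) = Fin.cons t q from rfl]
      rw [Mnat_cons]
    rw [e1]
    have step2 : ∀ t : ℤ, ∑' q : Fin (k + 1) → ℤ,
        ENNReal.ofReal (ψ ((max t.natAbs 1 * Mnat q : ℕ))) ≤
        9 ^ (k + 1) * ∑' h : ℕ,
          (LL h) ^ k * ENNReal.ofReal (ψ ((max t.natAbs 1 * (h + 1) : ℕ))) := by
      intro t
      set a := max t.natAbs 1 with ha
      have ha1 : 1 ≤ a := le_max_right _ _
      set ψt : ℝ → ℝ := fun x => ψ ((a : ℝ) * x) with hψt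
      have hψtmono : AntitoneOn ψt (Set.Ioi 0) := by
        intro x hx y hy hxy
        have hax : (0:ℝ) < a * x := by
          have : (0:ℝ) < a := by exact_mod_cast ha1
          exact mul_pos this hx
        have hay : (0:ℝ) < a * y := by
          have : (0:ℝ) < a := by exact_mod_cast ha1
          exact mul_pos this hy
        exact hm hax hay (by nlinarith [show (0:ℝ) < a by exact_mod_cast ha1])
      have := ih ψt hψtmono
      calc ∑' q : Fin (k + 1) → ℤ, ENNReal.ofReal (ψ ((a * Mnat q : ℕ)))
          = ∑' q : Fin (k + 1) → ℤ, ENNReal.ofReal (ψt ((Mnat q : ℕ))) := by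
            refine tsum_congr fun q => ?_
            congr 1
            rw [hψt]
            push_cast
            ring_nf
        _ ≤ 9 ^ (k + 1) * ∑' h : ℕ, (LL h) ^ k * ENNReal.ofReal (ψt ((h + 1 : ℕ))) := this
        _ = 9 ^ (k + 1) * ∑' h : ℕ,
            (LL h) ^ k * ENNReal.ofReal (ψ ((a * (h + 1) : ℕ))) := by
            congr 1
            refine tsum_congr fun h => ?_
            congr 2
            rw [hψt]
            push_cast
            ring_nf
    calc ∑' (t : ℤ) (q : Fin (k + 1) → ℤ),
          ENNReal.ofReal (ψ ((max t.natAbs 1 * Mnat q : ℕ)))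
        ≤ ∑' t : ℤ, 9 ^ (k + 1) * ∑' h : ℕ,
            (LL h) ^ k * ENNReal.ofReal (ψ ((max t.natAbs 1 * (h + 1) : ℕ))) :=
          ENNReal.tsum_le_tsum step2
      _ = 9 ^ (k + 1) * ∑' (h : ℕ) (t : ℤ),
            (LL h) ^ k * ENNReal.ofReal (ψ ((max t.natAbs 1 * (h + 1) : ℕ))) := by
          rw [ENNReal.tsum_mul_left, ENNReal.tsum_comm]
      _ = 9 ^ (k + 1) * ∑' h : ℕ, (LL h) ^ k *
            ∑' t : ℤ, ENNReal.ofReal (ψ ((max t.natAbs 1 * (h + 1) : ℕ))) := by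
          congr 1
          exact tsum_congr fun h => ENNReal.tsum_mul_left
      _ ≤ 9 ^ (k + 1) * ∑' h : ℕ, (LL h) ^ k *
            (3 * (ENNReal.ofReal (ψ ((h + 1 : ℕ))) +
              (((h : ℝ≥0∞) + 1))⁻¹ *
                ∑' m : ℕ, (if h + 1 ≤ m then ENNReal.ofReal (ψ ((m + 1 : ℕ))) else 0))) := by
          refine mul_le_mul' le_rfl (ENNReal.tsum_le_tsum fun h => mul_le_mul' le_rfl ?_)
          calc ∑' t : ℤ, ENNReal.ofReal (ψ ((max t.natAbs 1 * (h + 1) : ℕ)))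
              ≤ 3 * ∑' a : ℕ, ENNReal.ofReal (ψ (((a + 1) * (h + 1) : ℕ))) :=
                sumZ (fun b => ENNReal.ofReal (ψ ((b * (h + 1) : ℕ))))
            _ ≤ _ := mul_le_mul' le_rfl (sumBlocks hm h)
      _ = 9 ^ (k + 1) * 3 * ((∑' h : ℕ, (LL h) ^ k * ENNReal.ofReal (ψ ((h + 1 : ℕ)))) +
            ∑' h : ℕ, (LL h) ^ k * ((((h : ℝ≥0∞) + 1))⁻¹ *
              ∑' m : ℕ, (if h + 1 ≤ m then ENNReal.ofReal (ψ ((m + 1 : ℕ))) else 0))) := by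
          rw [← ENNReal.tsum_add, mul_assoc]
          congr 1
          rw [← ENNReal.tsum_mul_left]
          refine tsum_congr fun h => ?_
          ring
      _ ≤ 9 ^ (k + 1) * 3 * ((∑' h : ℕ, (LL h) ^ (k + 1) * ENNReal.ofReal (ψ ((h + 1 : ℕ)))) +
            ∑' h : ℕ, (LL h) ^ (k + 1) * ENNReal.ofReal (ψ ((h + 1 : ℕ)))) := by
          refine mul_le_mul' le_rfl (add_le_add ?_ ?_)
          · refine ENNReal.tsum_le_tsum fun h => mul_le_mul' ?_ le_rfl
            exact pow_le_pow_right₀ (one_le_LL h) (Nat.le_succ k)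
          · refine le_trans (le_of_eq (tsum_congr fun h => ?_)) (sumTail ψ k)
            rw [mul_assoc]
      _ ≤ 9 ^ (k + 1 + 1) * ∑' h : ℕ, (LL h) ^ (k + 1) * ENNReal.ofReal (ψ ((h + 1 : ℕ))) := by
          rw [← two_mul, ← mul_assoc]
          refine mul_le_mul' ?_ le_rfl
          rw [pow_succ]
          calc (9:ℝ≥0∞) ^ (k+1) * 3 * 2 = 9 ^ (k+1) * 6 := by ring
            _ ≤ 9 ^ (k+1) * 9 := mul_le_mul' le_rfl (by norm_num)

/-- If `ψ` is non-increasing with `∑_h (log h)^{n-1} ψ(h) < ∞`, then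
`∑_{q ∈ ℤⁿ, q ≠ 0} ψ(Π₊(q)) < ∞`. -/
theorem summable_multiplicative (n : ℕ) (hn : 0 < n) (ψ : ℝ → ℝ)
    (hpos : ∀ x > (0 : ℝ), 0 < ψ x) (hmono : AntitoneOn ψ (Set.Ioi 0))
    (hsum : Summable (fun h : ℕ => (Real.log (h + 1)) ^ (n - 1) * ψ (h + 1))) :
    Summable (fun q : {q : Fin n → ℤ // q ≠ 0} => ψ (PiPlus q.1)) := by
  obtain ⟨k, rfl⟩ : ∃ k, n = k + 1 := ⟨n - 1, by omega⟩
  simp only [Nat.add_sub_cancel] at hsum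
  have hψ0 : ∀ h : ℕ, 0 ≤ ψ ((h : ℝ) + 1) := fun h => (hpos _ (by positivity)).le
  -- summability of plain ψ (h+1)
  have hsum1 : Summable (fun h : ℕ => ψ ((h : ℝ) + 1)) := by
    rcases Nat.eq_zero_or_pos k with hk | hk
    · subst hk; simpa using hsum
    · have h2 : Summable (fun h : ℕ => (Real.log ((h + 2 : ℕ) + 1)) ^ k * ψ ((h + 2 : ℕ) + 1)) :=
        (summable_nat_add_iff 2).2 hsum
      refine (summable_nat_add_iff 2).1 ?_
      refine h2.of_nonneg_of_le (fun h => hψ0 _) (fun h => ?_)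
      have hlog : (1 : ℝ) ≤ Real.log ((h + 2 : ℕ) + 1) := by
        rw [Real.le_log_iff_exp_le (by positivity)]
        calc Real.exp 1 ≤ 2.7182818286 := (Real.exp_one_lt_d9).le
          _ ≤ ((h + 2 : ℕ) : ℝ) + 1 := by push_cast; linarith [Nat.cast_nonneg (α := ℝ) h]
      have := one_le_pow₀ (n := k) hlog
      exact le_mul_of_one_le_left (hψ0 _) this
  -- summability of (1 + log)^k ψ
  have hsumG : Summable (fun h : ℕ => (1 + Real.log ((h : ℝ) + 1)) ^ k * ψ ((h : ℝ) + 1)) := by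
    refine Summable.of_nonneg_of_le (fun h => ?_) (fun h => ?_)
      (((hsum1.mul_left ((2:ℝ) ^ k)).add (hsum.mul_left ((2:ℝ) ^ k))))
    · have : (0:ℝ) ≤ 1 + Real.log ((h : ℝ) + 1) := by
        have := Real.log_nonneg (show (1:ℝ) ≤ (h:ℝ)+1 by linarith [Nat.cast_nonneg (α := ℝ) h])
        linarith
      exact mul_nonneg (pow_nonneg this k) (hψ0 h)
    · have hx : (0:ℝ) ≤ Real.log ((h : ℝ) + 1) :=
        Real.log_nonneg (by linarith [Nat.cast_nonneg (α := ℝ) h])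
      have hp := hψ0 h
      have hb : (1 + Real.log ((h : ℝ) + 1)) ^ k ≤
          2 ^ k * (1 + (Real.log ((h : ℝ) + 1)) ^ k) := by
        set x := Real.log ((h : ℝ) + 1)
        rcases le_total x 1 with hx1 | hx1
        · have h1 : (1 + x) ^ k ≤ 2 ^ k := by
            refine pow_le_pow_left₀ (by linarith) (by linarith) k
          nlinarith [pow_nonneg hx k, pow_nonneg (by norm_num : (0:ℝ) ≤ 2) k]
        · have h1 : (1 + x) ^ k ≤ (2 * x) ^ k := by
            refine pow_le_pow_left₀ (by linarith) (by linarith) k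
          rw [mul_pow] at h1
          nlinarith [pow_nonneg hx k, pow_nonneg (by norm_num : (0:ℝ) ≤ 2) k]
      calc (1 + Real.log ((h : ℝ) + 1)) ^ k * ψ ((h : ℝ) + 1)
          ≤ (2 ^ k * (1 + (Real.log ((h : ℝ) + 1)) ^ k)) * ψ ((h : ℝ) + 1) := by
            exact mul_le_mul_of_nonneg_right hb hp
        _ = 2 ^ k * ψ ((h : ℝ) + 1) + 2 ^ k * ((Real.log ((h : ℝ) + 1)) ^ k * ψ ((h : ℝ) + 1)) := by
            ring
  -- ENNReal finiteness of the weighted sum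
  have hfin : (∑' h : ℕ, (LL h) ^ k * ENNReal.ofReal (ψ ((h + 1 : ℕ)))) ≠ ⊤ := by
    have e1 : ∀ h : ℕ, (LL h) ^ k * ENNReal.ofReal (ψ ((h + 1 : ℕ))) =
        ENNReal.ofReal ((1 + Real.log ((h : ℝ) + 1)) ^ k * ψ ((h : ℝ) + 1)) := by
      intro h
      have hL0 : (0:ℝ) ≤ 1 + Real.log ((h : ℝ) + 1) := by
        have := Real.log_nonneg (show (1:ℝ) ≤ (h:ℝ)+1 by linarith [Nat.cast_nonneg (α := ℝ) h])
        linarith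
      rw [ENNReal.ofReal_mul (pow_nonneg hL0 k), ENNReal.ofReal_pow hL0]
      simp only [LL]
      congr 3
      push_cast
      ring
    rw [tsum_congr e1, ← ENNReal.ofReal_tsum_of_nonneg (fun h => ?_) hsumG]
    · exact ENNReal.ofReal_ne_top
    · have hx : (0:ℝ) ≤ Real.log ((h : ℝ) + 1) :=
        Real.log_nonneg (by linarith [Nat.cast_nonneg (α := ℝ) h])
      have := hψ0 h
      positivity
  -- finiteness of the full vector sum
  have hfin2 : (∑' q : Fin (k + 1) → ℤ, ENNReal.ofReal (ψ ((Mnat q : ℕ)))) ≠ ⊤ := by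
    refine ne_top_of_le_ne_top ?_ (key k ψ hmono)
    exact ENNReal.mul_ne_top (by simp) hfin
  -- restrict to nonzero vectors
  have hsub : (∑' q : {q : Fin (k + 1) → ℤ // q ≠ 0}, ENNReal.ofReal (ψ (PiPlus q.1))) ≠ ⊤ := by
    refine ne_top_of_le_ne_top hfin2 ?_
    have e2 : ∀ q : {q : Fin (k + 1) → ℤ // q ≠ 0},
        ENNReal.ofReal (ψ (PiPlus q.1)) = ENNReal.ofReal (ψ ((Mnat q.1 : ℕ))) := by
      intro q; rw [PiPlus_eq]
    rw [tsum_congr e2]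
    exact ENNReal.tsum_comp_le_tsum_of_injective Subtype.val_injective
      (fun q => ENNReal.ofReal (ψ ((Mnat q : ℕ))))
  -- convert to real summability
  have hnn : ∀ q : {q : Fin (k + 1) → ℤ // q ≠ 0}, 0 ≤ ψ (PiPlus q.1) := by
    intro q
    refine (hpos _ ?_).le
    rw [PiPlus_eq]
    exact_mod_cast Mnat_pos q.1
  have hS : Summable (fun q : {q : Fin (k + 1) → ℤ // q ≠ 0} => (ψ (PiPlus q.1)).toNNReal) := by
    rw [← ENNReal.tsum_coe_ne_top_iff_summable]
    convert hsub using 2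
    exact funext fun q => rfl
  have := NNReal.summable_coe.2 hS
  convert this using 1
  funext q
  rw [Real.coe_toNNReal _ (hnn q)]
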